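/- Assume ūB(0) > ūA(0) and ūA(1) > ūB(1). Then a point x ∈ 𝒳_s satisfies 0 ∈ 𝒱(x) if and only if x = qρ for some q ∈ [0,1] such that q = 0, or q = 1, or ūA(q) = ūB(q). In particular, the equilibria of the continuous-time imitation population dynamics are exactly the points qρ where q ranges over the equilibria of the abstract dynamics, so the two dynamics have the same number of equilibria. -/

import Mathlib

open scoped Classical
open MeasureTheory Filter Set

/-- The state space `ℝ^p`, with the Euclidean norm. -/
abbrev Vec (p : ℕ) := EuclideanSpace ℝ (Fin p)

/-- Maximum of finitely many polynomial utilities at `y`. -/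
noncomputable def ubar {p : ℕ} (u : Fin p → Polynomial ℝ) (y : ℝ) : ℝ :=
  ⨆ i, (u i).eval y

/-- The total proportion of `A`-players: `σ(x) = Σ_i x_i`. -/
noncomputable def sigma' {p : ℕ} (x : Vec p) : ℝ := ∑ i, x i

/-- The state space `𝒳_s = ∏_i [0, ρ_i]`. -/
def Xs {p : ℕ} (ρ : Vec p) : Set (Vec p) := {x | ∀ i, x i ∈ Set.Icc 0 (ρ i)}

/-- The set-valued map of the continuous-time imitation population dynamics. -/
noncomputable def Vmap {p : ℕ} (ρ : Vec p) (uA uB : Fin p → Polynomial ℝ)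
    (x : Vec p) : Set (Vec p) :=
  if x ∈ interior (Xs ρ) ∧ ubar uB (sigma' x) < ubar uA (sigma' x) then {ρ - x}
  else if x ∈ interior (Xs ρ) ∧ ubar uA (sigma' x) < ubar uB (sigma' x) then {-x}
  else segment ℝ (ρ - x) (-x)

/-- A Carathéodory solution of the continuous-time imitation population dynamics on `[0,∞)`:
a locally absolutely continuous `𝒳_s`-valued function whose derivative lies in `Vmap`
almost everywhere, expressed in integral form. -/
def IsPopSol {p : ℕ} (ρ : Vec p) (uA uB : Fin p → Polynomial ℝ) (x : ℝ → Vec p) : Prop :=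
  (∀ t, 0 ≤ t → x t ∈ Xs ρ) ∧
  ∃ v : ℝ → Vec p,
    (∀ᵐ t ∂(MeasureTheory.volume.restrict (Set.Ici (0:ℝ))), v t ∈ Vmap ρ uA uB (x t)) ∧
    (∀ t, 0 ≤ t → IntervalIntegrable v MeasureTheory.volume 0 t) ∧
    (∀ t, 0 ≤ t → x t = x 0 + ∫ s in (0:ℝ)..t, v s)

theorem mem_interior_Xs {p : ℕ} (ρ : Vec p) (x : Vec p) :
    x ∈ interior (Xs ρ) ↔ ∀ i, x i ∈ Set.Ioo 0 (ρ i) := by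
  have hXs : Xs ρ = (PiLp.continuousLinearEquiv 2 ℝ (fun _ : Fin p => ℝ)).toHomeomorph ⁻¹'
      (Set.pi Set.univ fun i => Set.Icc 0 (ρ i)) := by
    ext y
    simp only [Xs, Set.mem_setOf_eq, Set.mem_preimage, Set.mem_pi, Set.mem_univ,
      forall_true_left]
    rfl
  rw [hXs, ← Homeomorph.preimage_interior, interior_pi_set Set.finite_univ]
  simp only [Set.mem_preimage, Set.mem_pi, Set.mem_univ, forall_true_left, interior_Icc]
  rfl

theorem sigma_smul {p : ℕ} (ρ : Vec p) (hsum : ∑ i, ρ i = 1) (q : ℝ) :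
    sigma' (q • ρ) = q := by
  simp only [sigma', PiLp.smul_apply, smul_eq_mul]
  rw [← Finset.mul_sum, hsum, mul_one]

theorem zero_mem_segment_iff {p : ℕ} (ρ x : Vec p) :
    (0 : Vec p) ∈ segment ℝ (ρ - x) (-x) ↔ ∃ q ∈ Set.Icc (0:ℝ) 1, x = q • ρ := by
  constructor
  · rintro ⟨a, b, ha, hb, hab, h⟩
    refine ⟨a, ⟨ha, by linarith⟩, ?_⟩
    ext i
    have hi := congrArg (fun v : Vec p => v i) h
    simp only [PiLp.add_apply, PiLp.smul_apply, PiLp.sub_apply, PiLp.neg_apply,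
      smul_eq_mul, PiLp.zero_apply] at hi ⊢
    linear_combination -hi - x i * hab
  · rintro ⟨q, ⟨hq0, hq1⟩, rfl⟩
    refine ⟨q, 1 - q, hq0, by linarith, by ring, ?_⟩
    ext i
    simp only [PiLp.add_apply, PiLp.smul_apply, PiLp.sub_apply, PiLp.neg_apply,
      smul_eq_mul, PiLp.zero_apply]
    ring

theorem key {p : ℕ} (hp : 0 < p) (ρ : Vec p) (hρ : ∀ i, 0 < ρ i) (hsum : ∑ i, ρ i = 1)
    (uA uB : Fin p → Polynomial ℝ) (x : Vec p) :
    (0 : Vec p) ∈ Vmap ρ uA uB x ↔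
      ∃ q ∈ Set.Icc (0:ℝ) 1, x = q • ρ ∧
        (q = 0 ∨ q = 1 ∨ ubar uA q = ubar uB q) := by
  set i0 : Fin p := ⟨0, hp⟩
  constructor
  · intro h
    unfold Vmap at h
    split_ifs at h with h1 h2
    · exfalso
      rw [Set.mem_singleton_iff] at h
      have hx : x = ρ := (eq_of_sub_eq_zero h.symm).symm
      rw [hx, mem_interior_Xs] at h1
      exact lt_irrefl _ (h1.1 i0).2
    · exfalso
      rw [Set.mem_singleton_iff] at h
      have hx : x = 0 := by
        have := neg_eq_zero.mp h.symm; exact this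
      rw [hx, mem_interior_Xs] at h2
      have := (h2.1 i0).1
      simp at this
    · obtain ⟨q, hq, rfl⟩ := (zero_mem_segment_iff ρ x).mp h
      refine ⟨q, hq, rfl, ?_⟩
      by_cases hq0 : q = 0
      · exact Or.inl hq0
      by_cases hq1 : q = 1
      · exact Or.inr (Or.inl hq1)
      refine Or.inr (Or.inr ?_)
      have hq0' : 0 < q := lt_of_le_of_ne hq.1 (Ne.symm hq0)
      have hq1' : q < 1 := lt_of_le_of_ne hq.2 hq1
      have hint : q • ρ ∈ interior (Xs ρ) := by
        rw [mem_interior_Xs]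
        intro i
        simp only [PiLp.smul_apply, smul_eq_mul]
        exact ⟨mul_pos hq0' (hρ i), by nlinarith [hρ i]⟩
      rw [sigma_smul ρ hsum] at h1 h2
      push_neg at h1 h2
      exact le_antisymm (h1 hint) (h2 hint)
  · rintro ⟨q, ⟨hq0, hq1⟩, rfl, hq⟩
    have hseg : (0 : Vec p) ∈ segment ℝ (ρ - q • ρ) (-(q • ρ)) :=
      (zero_mem_segment_iff ρ (q • ρ)).mpr ⟨q, ⟨hq0, hq1⟩, rfl⟩
    have hnoint : (q = 0 ∨ q = 1) → q • ρ ∉ interior (Xs ρ) := by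
      rintro (rfl | rfl) hint <;> rw [mem_interior_Xs] at hint
      · have := (hint i0).1; simp at this
      · have := (hint i0).2; simp at this
    unfold Vmap
    rcases hq with rfl | rfl | heq
    · rw [if_neg (fun hc => hnoint (Or.inl rfl) hc.1),
        if_neg (fun hc => hnoint (Or.inl rfl) hc.1)]
      exact hseg
    · rw [if_neg (fun hc => hnoint (Or.inr rfl) hc.1),
        if_neg (fun hc => hnoint (Or.inr rfl) hc.1)]
      exact hseg
    · rw [if_neg (fun hc => absurd hc.2 (by rw [sigma_smul ρ hsum, heq]; exact lt_irrefl _)),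
        if_neg (fun hc => absurd hc.2 (by rw [sigma_smul ρ hsum, heq]; exact lt_irrefl _))]
      exact hseg
theorem population_equilibria_characterization
    {p : ℕ} (hp : 0 < p) (ρ : Vec p) (hρ : ∀ i, 0 < ρ i) (hsum : ∑ i, ρ i = 1)
    (uA uB : Fin p → Polynomial ℝ)
    (h0 : ubar uA 0 < ubar uB 0) (h1 : ubar uB 1 < ubar uA 1) :
    (∀ x ∈ Xs ρ, ((0 : Vec p) ∈ Vmap ρ uA uB x ↔
      ∃ q ∈ Set.Icc (0:ℝ) 1, x = q • ρ ∧
        (q = 0 ∨ q = 1 ∨ ubar uA q = ubar uB q))) ∧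
    {x : Vec p | x ∈ Xs ρ ∧ (0 : Vec p) ∈ Vmap ρ uA uB x}.ncard
      = {q ∈ Set.Icc (0:ℝ) 1 | q = 0 ∨ q = 1 ∨ ubar uA q = ubar uB q}.ncard := by
  have i0 : Fin p := ⟨0, hp⟩
  refine ⟨fun x _ => key hp ρ hρ hsum uA uB x, ?_⟩
  have hset : {x : Vec p | x ∈ Xs ρ ∧ (0 : Vec p) ∈ Vmap ρ uA uB x}
      = (fun q : ℝ => q • ρ) '' {q ∈ Set.Icc (0:ℝ) 1 | q = 0 ∨ q = 1 ∨ ubar uA q = ubar uB q} := by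
    ext x
    constructor
    · rintro ⟨-, hx⟩
      obtain ⟨q, hq, rfl, hcond⟩ := (key hp ρ hρ hsum uA uB x).mp hx
      exact ⟨q, ⟨hq, hcond⟩, rfl⟩
    · rintro ⟨q, ⟨hq, hcond⟩, rfl⟩
      refine ⟨fun i => ?_, ?_⟩
      · simp only [PiLp.smul_apply, smul_eq_mul, Set.mem_Icc]
        constructor
        · exact mul_nonneg hq.1 (hρ i).le
        · nlinarith [hρ i, hq.1, hq.2]
      · exact (key hp ρ hρ hsum uA uB _).mpr ⟨q, hq, rfl, hcond⟩
  rw [hset, Set.ncard_image_of_injective]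
  intro a b hab
  have := congrArg (fun v : Vec p => v i0) hab
  simp only [PiLp.smul_apply, smul_eq_mul] at this
  exact mul_right_cancel₀ (ne_of_gt (hρ i0)) this
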